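/- (Lemma 1, double regularization) Let x̃ ∈ {0, ±d}^n be k-sparse, y = A x̃, and let x⋆ be a global minimizer over [-d,d]^n of the functional F(x) = (1/2)‖y − Ax‖₂² + λd‖x‖₁ − (λ/2)‖x‖₂² with λ > 0. Then (a) ‖x⋆‖₂ ≤ ‖x̃‖₂ and (b) ‖x⋆‖₁ ≤ ‖x̃‖₁. -/

import Mathlib

theorem stmt_4 (m n k : ℕ) (d lam : ℝ) (hd : 0 < d) (hlam : 0 < lam)
    (A : Matrix (Fin m) (Fin n) ℝ) (xt : Fin n → ℝ)
    (hval : ∀ i, xt i = 0 ∨ xt i = -d ∨ xt i = d)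
    (hk : ({i | xt i ≠ 0} : Finset (Fin n)).card = k)
    (y : Fin m → ℝ) (hy : y = A.mulVec xt)
    (F : (Fin n → ℝ) → ℝ)
    (hF : ∀ x, F x = (1 / 2) * (∑ j, (A.mulVec x j - y j) ^ 2)
        + lam * d * (∑ i, |x i|) - (lam / 2) * (∑ i, (x i) ^ 2))
    (xs : Fin n → ℝ) (hxs : ∀ i, xs i ∈ Set.Icc (-d) d)
    (hmin : ∀ x : Fin n → ℝ, (∀ i, x i ∈ Set.Icc (-d) d) → F xs ≤ F x) :
    Real.sqrt (∑ i, (xs i) ^ 2) ≤ Real.sqrt (∑ i, (xt i) ^ 2) ∧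
    (∑ i, |xs i|) ≤ ∑ i, |xt i| := by
  set S2s := ∑ i, (xs i) ^ 2 with hS2s
  set S2t := ∑ i, (xt i) ^ 2 with hS2t
  set S1s := ∑ i, |xs i| with hS1s
  set S1t := ∑ i, |xt i| with hS1t
  -- xt is in the box
  have hxt_box : ∀ i, xt i ∈ Set.Icc (-d) d := by
    intro i
    rcases hval i with h | h | h <;> simp [h, hd.le] <;> constructor <;> linarith [hd.le]
  -- S2t = d * S1t
  have h2t : S2t = d * S1t := by
    rw [hS2t, hS1t, Finset.mul_sum]
    apply Finset.sum_congr rfl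
    intro i _
    rcases hval i with h | h | h <;> rw [h] <;>
      simp [abs_of_nonneg hd.le, abs_of_nonpos (neg_nonpos.mpr hd.le)] <;> ring
  -- pointwise xs i ^ 2 ≤ d * |xs i|
  have h2s : S2s ≤ d * S1s := by
    rw [hS2s, hS1s, Finset.mul_sum]
    apply Finset.sum_le_sum
    intro i _
    have h := hxs i
    have habs : |xs i| ≤ d := abs_le.mpr ⟨h.1, h.2⟩
    rw [← sq_abs, sq]
    exact mul_le_mul_of_nonneg_right habs (abs_nonneg _)
  -- F xt value
  have hFxt : F xt = lam * d * S1t - (lam / 2) * S2t := by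
    rw [hF xt, hy]
    simp
    rw [hS1t, hS2t]
  -- F xs lower bound
  have hFxs : lam * d * S1s - (lam / 2) * S2s ≤ F xs := by
    rw [hF xs]
    have hq : (0:ℝ) ≤ ∑ j, (A.mulVec xs j - y j) ^ 2 :=
      Finset.sum_nonneg fun j _ => sq_nonneg _
    nlinarith
  have hle : F xs ≤ F xt := hmin xt hxt_box
  have key : lam * d * S1s - (lam / 2) * S2s ≤ lam * d * S1t - (lam / 2) * S2t := by
    linarith [hFxs, hle, hFxt.le, hFxt.ge]
  have hS2 : S2s ≤ S2t := by nlinarith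
  constructor
  · exact Real.sqrt_le_sqrt hS2
  · have h1 : lam / 2 * S2s ≤ lam / 2 * S2t :=
      mul_le_mul_of_nonneg_left hS2 (le_of_lt (half_pos hlam))
    have h2 : lam * d * S1s ≤ lam * d * S1t := by linarith
    have hld : 0 < lam * d := mul_pos hlam hd
    nlinarith [h2, hld]
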